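/- Suppose s_f − s₀ = (v₀ + v_f)/2 and v₀ ≠ v_f. Then for every a > 0, the intersection 𝒜 ∩ ℬ is nonempty if and only if a ≥ |v_f − v₀|. That is, the critical feasibility bound is a_c = |v_f − v₀|. -/

import Mathlib

open MeasureTheory

/-- The measure on ℝ representing integration over the interval [0,1]. -/
noncomputable def mu01 : Measure ℝ := volume.restrict (Set.Icc 0 1)

/-- The affine set 𝒜 of controls in L²([0,1],ℝ) steering the double integrator
from (s₀, v₀) to (s_f, v_f). -/
def setA (s0 sf v0 vf : ℝ) : Set (Lp ℝ 2 mu01) :=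
  {u | (∫ t, u t ∂mu01) = vf - v0 ∧ (∫ t, (1 - t) * u t ∂mu01) = sf - s0 - v0}

/-- The box ℬ of controls bounded in absolute value by `a` a.e. on [0,1]. -/
def setB (a : ℝ) : Set (Lp ℝ 2 mu01) :=
  {u | ∀ᵐ t ∂mu01, |u t| ≤ a}

instance : IsFiniteMeasure mu01 := by
  constructor
  rw [mu01, Measure.restrict_apply_univ, Real.volume_Icc]
  norm_num

lemma mu01_univ : (mu01 Set.univ).toReal = 1 := by
  rw [mu01, Measure.restrict_apply_univ, Real.volume_Icc]
  norm_num

lemma integral_mu01 (f : ℝ → ℝ) : (∫ t, f t ∂mu01) = ∫ t in (0:ℝ)..1, f t := by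
  rw [mu01, intervalIntegral.integral_of_le zero_le_one,
    MeasureTheory.integral_Icc_eq_integral_Ioc]

/-- Critical feasibility bound, case s_f - s₀ = (v₀+v_f)/2 and v₀ ≠ v_f:
a_c = |v_f - v₀|. -/
theorem stmt_6 (s0 sf v0 vf : ℝ) (hs : sf - s0 = (v0 + vf) / 2) (hv : v0 ≠ vf) :
    ∀ a : ℝ, 0 < a →
      ((setA s0 sf v0 vf ∩ setB a).Nonempty ↔ |vf - v0| ≤ a) := by
  intro a ha
  constructor
  · rintro ⟨u, ⟨h1, h2⟩, hb⟩
    have hint : Integrable (u : ℝ → ℝ) mu01 :=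
      (Lp.memLp u).integrable (by norm_num)
    calc |vf - v0| = |∫ t, u t ∂mu01| := by rw [h1]
      _ ≤ ∫ t, |u t| ∂mu01 := by
          simpa using norm_integral_le_integral_norm (μ := mu01) (f := (u : ℝ → ℝ))
      _ ≤ ∫ _t, a ∂mu01 := integral_mono_ae hint.abs (integrable_const a) hb
      _ = a := by rw [integral_const, smul_eq_mul, measureReal_def, mu01_univ, one_mul]
  · intro hle
    set c : ℝ := vf - v0 with hc
    refine ⟨Lp.const 2 mu01 c, ⟨?_, ?_⟩, ?_⟩
    · rw [integral_congr_ae (Lp.coeFn_const 2 mu01 c)]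
      simp [integral_const, measureReal_def, mu01_univ, hc]
    · have : (∫ t, (1 - t) * (Lp.const 2 mu01 c : ℝ → ℝ) t ∂mu01)
          = ∫ t, (1 - t) * c ∂mu01 := by
        refine integral_congr_ae ?_
        filter_upwards [Lp.coeFn_const 2 mu01 c] with t ht using by rw [ht]; rfl
      rw [this, integral_mu01]
      have : (∫ t in (0:ℝ)..1, (1 - t) * c) = c / 2 := by
        simp only [sub_mul, one_mul]
        rw [intervalIntegral.integral_sub intervalIntegrable_const ((by fun_prop : Continuous fun t : ℝ => t * c).intervalIntegrable _ _)]
        simp [intervalIntegral.integral_mul_const]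
        ring
      rw [this, hs, hc]
      ring
    · filter_upwards [Lp.coeFn_const 2 mu01 c] with t ht
      rw [ht]
      exact hle
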